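/- Fix R > 0 and an isotropic subspace V of R^{2n}. For all (z,t), (ζ,τ) ∈ 𝕍⊥ with Euclidean norm at most R, and for all w ∈ V, one has |z−ζ| + |t−τ| ≤ C(R) · ( |z+w−ζ| + |t−τ + ω(z,ζ)/2 − ω(z+ζ,w)/2|^{1/2} ), where C(R) is a constant depending only on R (and the dimension). Consequently, the identity map from (𝕍⊥, d_{V\H^n}) to (𝕍⊥, Euclidean metric) is locally Lipschitz. -/

import Mathlib

open scoped RealInnerProductSpace
open Module
noncomputable section

/-- `ℝ^{2n}` with Euclidean norm, coordinates paired as `(j,0) ↔ x_j`, `(j,1) ↔ y_j`. -/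
abbrev Z (n : ℕ) := EuclideanSpace ℝ (Fin n × Fin 2)

/-- the standard symplectic form -/
def symp {n : ℕ} (z w : Z n) : ℝ := ∑ j : Fin n, (z (j, 0) * w (j, 1) - z (j, 1) * w (j, 0))

/-- the Heisenberg group as a set -/
abbrev H (n : ℕ) := Z n × ℝ

/-- Heisenberg group law -/
def Hmul {n : ℕ} (p q : H n) : H n := (p.1 + q.1, p.2 + q.2 + symp p.1 q.1 / 2)

/-- Heisenberg inverse -/
def Hinv {n : ℕ} (p : H n) : H n := (-p.1, -p.2)

/-- Korányi norm -/
def Knorm {n : ℕ} (p : H n) : ℝ := (‖p.1‖ ^ 4 + 16 * p.2 ^ 2) ^ ((1 : ℝ)/4)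

/-- Korányi metric -/
def dK {n : ℕ} (p q : H n) : ℝ := Knorm (Hmul (Hinv q) p)

/-- Euclidean orthogonal projection onto `V`, as a map `Z n → Z n` -/
def projV {n : ℕ} (V : Submodule ℝ (Z n)) (z : Z n) : Z n := (V.orthogonalProjection z : Z n)

/-- `V` is isotropic when the symplectic form vanishes identically on it. -/
def Isotropic {n : ℕ} (V : Submodule ℝ (Z n)) : Prop :=
  ∀ a ∈ V, ∀ b ∈ V, symp a b = 0

/-- horizontal projection `P_𝕍` -/
def PV {n : ℕ} (V : Submodule ℝ (Z n)) (p : H n) : H n := (projV V p.1, 0)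

/-- right-coset vertical projection `P_{V⊥}^R (p) = P_𝕍(p)⁻¹ * p` -/
def PR {n : ℕ} (V : Submodule ℝ (Z n)) (p : H n) : H n := Hmul (Hinv (PV V p)) p

/-- the quotient distance on `𝕍⊥`, `d_{V\Hⁿ}(p,q) = inf_{g ∈ 𝕍} d(g*p, q)` -/
def dQ {n : ℕ} (V : Submodule ℝ (Z n)) (p q : H n) : ℝ :=
  ⨅ w : V, dK (Hmul ((w : Z n), 0) p) q

/-- Euclidean distance on `Hⁿ = ℝ^{2n} × ℝ` -/
def dE {n : ℕ} (p q : H n) : ℝ := Real.sqrt (‖p.1 - q.1‖ ^ 2 + (p.2 - q.2) ^ 2)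


/- ### auxiliary lemmas -/

lemma symp_self' {n : ℕ} (z : Z n) : symp z z = 0 := by
  simp [symp, mul_comm]

lemma symp_antisymm' {n : ℕ} (a b : Z n) : symp a b = -symp b a := by
  simp only [symp, ← Finset.sum_neg_distrib]
  exact Finset.sum_congr rfl (fun j _ => by ring)

lemma symp_sub_right' {n : ℕ} (z a b : Z n) : symp z (a - b) = symp z a - symp z b := by
  simp only [symp, ← Finset.sum_sub_distrib]
  exact Finset.sum_congr rfl (fun j _ => by simp [PiLp.sub_apply]; ring)

lemma symp_add_left' {n : ℕ} (a b w : Z n) : symp (a + b) w = symp a w + symp b w := by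
  simp only [symp, ← Finset.sum_add_distrib]
  exact Finset.sum_congr rfl (fun j _ => by simp [PiLp.add_apply]; ring)

lemma abs_symp_le' {n : ℕ} (u v : Z n) : |symp u v| ≤ ‖u‖ * ‖v‖ := by
  classical
  set Ju : Z n := WithLp.toLp 2 (fun p : Fin n × Fin 2 => if p.2 = 0 then -u (p.1, 1) else u (p.1, 0)) with hJ
  have hinner : (inner ℝ Ju v : ℝ) = symp u v := by
    simp only [PiLp.inner_apply, RCLike.inner_apply, conj_trivial, symp]
    rw [Fintype.sum_prod_type]
    refine Finset.sum_congr rfl (fun j _ => ?_)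
    rw [Fin.sum_univ_two]
    simp [hJ]
    ring
  have hnorm : ‖Ju‖ = ‖u‖ := by
    rw [EuclideanSpace.norm_eq, EuclideanSpace.norm_eq]
    congr 1
    rw [Fintype.sum_prod_type, Fintype.sum_prod_type]
    refine Finset.sum_congr rfl (fun j _ => ?_)
    rw [Fin.sum_univ_two, Fin.sum_univ_two]
    simp [hJ]
    ring
  calc |symp u v| = |(inner ℝ Ju v : ℝ)| := by rw [hinner]
    _ ≤ ‖Ju‖ * ‖v‖ := abs_real_inner_le_norm _ _
    _ = ‖u‖ * ‖v‖ := by rw [hnorm]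

lemma pythag' {n : ℕ} {V : Submodule ℝ (Z n)} {u w : Z n}
    (hu : u ∈ Vᗮ) (hw : w ∈ V) : ‖u‖ ≤ ‖u + w‖ ∧ ‖w‖ ≤ ‖u + w‖ := by
  have hi : (inner ℝ u w : ℝ) = 0 := by
    rw [real_inner_comm]; exact hu w hw
  have h := norm_add_sq_real u w
  rw [hi] at h
  constructor <;>
    nlinarith [norm_nonneg u, norm_nonneg w, norm_nonneg (u + w)]

lemma Knorm_pow_four' {n : ℕ} (p : H n) : Knorm p ^ 4 = ‖p.1‖ ^ 4 + 16 * p.2 ^ 2 := by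
  have h : (0:ℝ) ≤ ‖p.1‖ ^ 4 + 16 * p.2 ^ 2 := by positivity
  rw [Knorm, ← Real.rpow_natCast (_ ^ ((1:ℝ)/4)) 4, ← Real.rpow_mul h]
  norm_num

lemma Knorm_nonneg' {n : ℕ} (p : H n) : 0 ≤ Knorm p := by
  unfold Knorm; positivity

lemma norm_le_Knorm' {n : ℕ} (p : H n) : ‖p.1‖ ≤ Knorm p := by
  refine le_of_pow_le_pow_left₀ (n := 4) (by norm_num) (Knorm_nonneg' p) ?_
  rw [Knorm_pow_four']; nlinarith [sq_nonneg p.2]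

lemma sqrt_abs_le_Knorm' {n : ℕ} (p : H n) : |p.2| ^ ((1:ℝ)/2) ≤ Knorm p := by
  refine le_of_pow_le_pow_left₀ (n := 4) (by norm_num) (Knorm_nonneg' p) ?_
  rw [Knorm_pow_four']
  have h : (|p.2| ^ ((1:ℝ)/2)) ^ 4 = p.2 ^ 2 := by
    rw [← Real.rpow_natCast (|p.2| ^ ((1:ℝ)/2)) 4, ← Real.rpow_mul (abs_nonneg _)]
    norm_num
  rw [h]
  nlinarith [pow_nonneg (norm_nonneg p.1) 4, sq_nonneg p.2]

lemma norm_le_of_dE {n : ℕ} (z : Z n) (t : ℝ) {R : ℝ} (h : dE (z, t) (0 : H n) ≤ R) :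
    ‖z‖ ≤ R ∧ |t| ≤ R := by
  have he : dE (z, t) (0 : H n) = Real.sqrt (‖z‖ ^ 2 + t ^ 2) := by
    simp [dE]
  rw [he] at h
  constructor
  · calc ‖z‖ = Real.sqrt (‖z‖ ^ 2) := (Real.sqrt_sq (norm_nonneg z)).symm
      _ ≤ Real.sqrt (‖z‖ ^ 2 + t ^ 2) := Real.sqrt_le_sqrt (by nlinarith [sq_nonneg t])
      _ ≤ R := h
  · calc |t| = Real.sqrt (t ^ 2) := (Real.sqrt_sq_eq_abs t).symm
      _ ≤ Real.sqrt (‖z‖ ^ 2 + t ^ 2) := Real.sqrt_le_sqrt (by nlinarith [sq_nonneg ‖z‖])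
      _ ≤ R := h

lemma dE_le_add {n : ℕ} (p q : H n) : dE p q ≤ ‖p.1 - q.1‖ + |p.2 - q.2| := by
  rw [dE]
  have h1 : ‖p.1 - q.1‖ ^ 2 + (p.2 - q.2) ^ 2 ≤ (‖p.1 - q.1‖ + |p.2 - q.2|) ^ 2 := by
    nlinarith [norm_nonneg (p.1 - q.1), abs_nonneg (p.2 - q.2), sq_abs (p.2 - q.2)]
  calc Real.sqrt (‖p.1 - q.1‖ ^ 2 + (p.2 - q.2) ^ 2)
      ≤ Real.sqrt ((‖p.1 - q.1‖ + |p.2 - q.2|) ^ 2) := Real.sqrt_le_sqrt h1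
    _ = ‖p.1 - q.1‖ + |p.2 - q.2| := Real.sqrt_sq (by positivity)

/-- the core estimate -/
lemma key_estimate {n : ℕ} (R : ℝ) (hR : 0 < R) (V : Submodule ℝ (Z n))
    (z ζ : Z n) (t τ : ℝ) (hz : z ∈ Vᗮ) (hζ : ζ ∈ Vᗮ)
    (hzR : dE (z, t) (0 : H n) ≤ R) (hζR : dE (ζ, τ) (0 : H n) ≤ R)
    (w : Z n) (hw : w ∈ V) :
    ‖z - ζ‖ + |t - τ| ≤
      (R ^ 2 / 2 + 9 * R / 2 + 2) * (‖z + w - ζ‖ +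
        |t - τ + symp z ζ / 2 - symp (z + ζ) w / 2| ^ ((1 : ℝ)/2)) := by
  obtain ⟨hzn, htn⟩ := norm_le_of_dE z t hzR
  obtain ⟨hζn, hτn⟩ := norm_le_of_dE ζ τ hζR
  set e : ℝ := t - τ + symp z ζ / 2 - symp (z + ζ) w / 2 with he
  set a : ℝ := ‖z + w - ζ‖ with ha
  set b : ℝ := |e| ^ ((1:ℝ)/2) with hb
  have ha0 : 0 ≤ a := norm_nonneg _
  have hb0 : 0 ≤ b := Real.rpow_nonneg (abs_nonneg e) _
  have hzwζ : z + w - ζ = (z - ζ) + w := by abel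
  have hpy := pythag' (V := V) (Submodule.sub_mem _ hz hζ) hw
  rw [← hzwζ] at hpy
  have h1 : ‖z - ζ‖ ≤ a := hpy.1
  have h2 : ‖w‖ ≤ a := hpy.2
  -- b ^ 2 = |e|
  have hb2 : b ^ 2 = |e| := by
    rw [hb, ← Real.rpow_natCast (|e| ^ ((1:ℝ)/2)) 2, ← Real.rpow_mul (abs_nonneg e)]
    norm_num
  -- symplectic bounds
  have hs1 : |symp z ζ| ≤ R * a := by
    have : symp z ζ = symp z (ζ - z) := by
      rw [symp_sub_right', symp_self']; ring
    rw [this]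
    calc |symp z (ζ - z)| ≤ ‖z‖ * ‖ζ - z‖ := abs_symp_le' _ _
      _ ≤ R * a := by
          rw [norm_sub_rev]
          exact mul_le_mul hzn h1 (norm_nonneg _) hR.le
  have hs2 : |symp (z + ζ) w| ≤ 2 * R * a := by
    calc |symp (z + ζ) w| ≤ ‖z + ζ‖ * ‖w‖ := abs_symp_le' _ _
      _ ≤ (2 * R) * a := by
          refine mul_le_mul ?_ h2 (norm_nonneg _) (by positivity)
          calc ‖z + ζ‖ ≤ ‖z‖ + ‖ζ‖ := norm_add_le _ _
            _ ≤ 2 * R := by linarith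
  have hs3 : |symp z ζ| ≤ R * R :=
    le_trans (abs_symp_le' _ _) (mul_le_mul hzn hζn (norm_nonneg _) hR.le)
  -- triangle bounds
  have htri : |t - τ| ≤ |e| + |symp z ζ| / 2 + |symp (z + ζ) w| / 2 := by
    have : t - τ = e - symp z ζ / 2 + symp (z + ζ) w / 2 := by rw [he]; ring
    rw [this]
    calc |e - symp z ζ / 2 + symp (z + ζ) w / 2|
        ≤ |e - symp z ζ / 2| + |symp (z + ζ) w / 2| := abs_add_le _ _
      _ ≤ |e| + |symp z ζ / 2| + |symp (z + ζ) w / 2| := by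
          have := abs_sub (e) (symp z ζ / 2)
          linarith [abs_sub_abs_le_abs_sub e (symp z ζ / 2), abs_sub_le e (symp z ζ / 2) 0,
            abs_sub e (symp z ζ / 2)]
      _ = |e| + |symp z ζ| / 2 + |symp (z + ζ) w| / 2 := by
          rw [abs_div, abs_div]; norm_num
  have hebound : |e| ≤ 2 * R + R ^ 2 / 2 + R * a := by
    rw [he]
    have h := abs_add_le (t - τ + symp z ζ / 2) (-(symp (z + ζ) w / 2))
    have h' : |t - τ + symp z ζ / 2| ≤ |t - τ| + |symp z ζ| / 2 := by
      have := abs_add_le (t - τ) (symp z ζ / 2)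
      rw [abs_div] at this; simpa using this
    have h'' : |t - τ| ≤ |t| + |τ| := abs_sub t τ
    have : |t - τ + symp z ζ / 2 - symp (z + ζ) w / 2|
        ≤ |t - τ + symp z ζ / 2| + |symp (z + ζ) w| / 2 := by
      rw [sub_eq_add_neg]
      calc _ ≤ |t - τ + symp z ζ / 2| + |-(symp (z + ζ) w / 2)| := abs_add_le _ _
        _ = |t - τ + symp z ζ / 2| + |symp (z + ζ) w| / 2 := by
            rw [abs_neg, abs_div]; norm_num
    nlinarith
  -- uniform bound  b^2 ≤ (K+1) b + R a  with K = 2R + R²/2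
  have hRa : (0:ℝ) ≤ R * a := by positivity
  have hKb : |e| ≤ (2 * R + R ^ 2 / 2 + 1) * b + R * a := by
    rcases le_or_gt b 1 with hble | hbgt
    · have hbb : b ^ 2 ≤ b := by nlinarith
      have h3 : (0:ℝ) ≤ (2 * R + R ^ 2 / 2) * b := by positivity
      rw [← hb2]; linarith
    · have hK : (2 * R + R ^ 2 / 2) ≤ (2 * R + R ^ 2 / 2) * b := by
        have h5 : (0:ℝ) ≤ 2 * R + R ^ 2 / 2 := by positivity
        have := mul_le_mul_of_nonneg_left hbgt.le h5
        linarith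
      linarith [hebound, hb0]
  have hrem : (0:ℝ) ≤ (R ^ 2 / 2 + 2 * R + 1) * a + (R + 1) * b := by positivity
  have hRb : (0:ℝ) ≤ R * b := by positivity
  linarith [htri, hKb, hs1, hs2, h1, hrem, hRb]

lemma symp_neg_left' {n : ℕ} (a b : Z n) : symp (-a) b = -symp a b := by
  simp only [symp, ← Finset.sum_neg_distrib]
  exact Finset.sum_congr rfl (fun j _ => by simp [PiLp.neg_apply]; ring)

lemma symp_add_right' {n : ℕ} (z a b : Z n) : symp z (a + b) = symp z a + symp z b := by
  simp only [symp, ← Finset.sum_add_distrib]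
  exact Finset.sum_congr rfl (fun j _ => by simp [PiLp.add_apply]; ring)

/-- For points of `𝕍⊥` of Euclidean norm at most `R` one has
`|z−ζ| + |t−τ| ≤ C(R) (|z+w−ζ| + |t−τ+ω(z,ζ)/2−ω(z+ζ,w)/2|^{1/2})` uniformly in `w ∈ V`;
consequently, the identity map from `(𝕍⊥, d_{V\Hⁿ})` to `(𝕍⊥, d_E)` is locally
Lipschitz (Lipschitz on every ball). -/
theorem quotient_to_euclidean_locally_lipschitz {n : ℕ} (R : ℝ) (hR : 0 < R) :
    ∃ C : ℝ, 0 < C ∧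
      (∀ (V : Submodule ℝ (Z n)), Isotropic V →
        ∀ (z ζ : Z n) (t τ : ℝ), z ∈ Vᗮ → ζ ∈ Vᗮ →
          dE (z, t) 0 ≤ R → dE (ζ, τ) 0 ≤ R → ∀ w ∈ V,
            ‖z - ζ‖ + |t - τ| ≤
              C * (‖z + w - ζ‖ +
                |t - τ + symp z ζ / 2 - symp (z + ζ) w / 2| ^ ((1 : ℝ)/2))) ∧
      (∀ (V : Submodule ℝ (Z n)), Isotropic V →
        ∀ p q : H n, p.1 ∈ Vᗮ → q.1 ∈ Vᗮ →
          dE p 0 ≤ R → dE q 0 ≤ R → dE p q ≤ C * dQ V p q) := by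
  have hC₀pos : 0 < R ^ 2 / 2 + 9 * R / 2 + 2 := by nlinarith [sq_nonneg R]
  set C₀ : ℝ := R ^ 2 / 2 + 9 * R / 2 + 2 with hC₀
  refine ⟨2 * C₀, by positivity, ?_, ?_⟩
  · intro V hV z ζ t τ hz hζ hzR hζR w hw
    have h := key_estimate R hR V z ζ t τ hz hζ hzR hζR w hw
    have hX : (0:ℝ) ≤ ‖z + w - ζ‖ +
        |t - τ + symp z ζ / 2 - symp (z + ζ) w / 2| ^ ((1 : ℝ)/2) := by
      have := Real.rpow_nonneg
        (abs_nonneg (t - τ + symp z ζ / 2 - symp (z + ζ) w / 2)) ((1:ℝ)/2)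
      linarith [norm_nonneg (z + w - ζ)]
    nlinarith [mul_nonneg hC₀pos.le hX]
  · intro V hV p q hp hq hpR hqR
    haveI : Nonempty V := ⟨0⟩
    have hbound : ∀ w : V, dE p q ≤ (2 * C₀) * dK (Hmul ((w : Z n), 0) p) q := by
      intro w
      set e : ℝ := p.2 - q.2 + symp p.1 q.1 / 2 - symp (p.1 + q.1) (w : Z n) / 2 with he
      have hfst : (Hmul (Hinv q) (Hmul ((w : Z n), 0) p)).1 = p.1 + (w : Z n) - q.1 := by
        simp only [Hmul, Hinv]
        abel
      have hsnd : (Hmul (Hinv q) (Hmul ((w : Z n), 0) p)).2 = e := by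
        simp only [Hmul, Hinv, he]
        rw [symp_neg_left', symp_add_right', symp_add_left',
          symp_antisymm' (w : Z n) p.1, symp_antisymm' q.1 p.1, symp_antisymm' q.1 (w : Z n)]
        ring
      have hK1 : ‖p.1 + (w : Z n) - q.1‖ ≤ dK (Hmul ((w : Z n), 0) p) q := by
        have h := norm_le_Knorm' (Hmul (Hinv q) (Hmul ((w : Z n), 0) p))
        rw [hfst] at h
        exact h
      have hK2 : |e| ^ ((1:ℝ)/2) ≤ dK (Hmul ((w : Z n), 0) p) q := by
        have h := sqrt_abs_le_Knorm' (Hmul (Hinv q) (Hmul ((w : Z n), 0) p))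
        rw [hsnd] at h
        exact h
      have hdKnn : 0 ≤ dK (Hmul ((w : Z n), 0) p) q := Knorm_nonneg' _
      have hkey := key_estimate R hR V p.1 q.1 p.2 q.2 hp hq (by simpa using hpR)
        (by simpa using hqR) (w : Z n) w.2
      have hdE := dE_le_add p q
      calc dE p q ≤ ‖p.1 - q.1‖ + |p.2 - q.2| := hdE
        _ ≤ C₀ * (‖p.1 + (w : Z n) - q.1‖ + |e| ^ ((1:ℝ)/2)) := by
            rw [he]; exact hkey
        _ ≤ C₀ * (2 * dK (Hmul ((w : Z n), 0) p) q) := by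
            refine mul_le_mul_of_nonneg_left ?_ hC₀pos.le
            linarith
        _ = (2 * C₀) * dK (Hmul ((w : Z n), 0) p) q := by ring
    have h2C : 0 < 2 * C₀ := by linarith
    have hdiv : dE p q / (2 * C₀) ≤ dQ V p q := by
      refine le_ciInf (fun w => ?_)
      rw [div_le_iff₀ h2C]
      calc dE p q ≤ (2 * C₀) * dK (Hmul ((w : Z n), 0) p) q := hbound w
        _ = dK (Hmul ((w : Z n), 0) p) q * (2 * C₀) := by ring
    rw [div_le_iff₀ h2C] at hdiv
    linarith [hdiv]
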